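/- Let u ∈ ℝ^{m×r}, v ∈ ℝ^{n×r} with uᵀu = vᵀv (balanced). If rank(uvᵀ) < r, then there exists a unit vector w ∈ ℝ^r with u w = 0 and v w = 0. -/
import Mathlib


open Matrix

private lemma sq_sum_mulVec {m r : ℕ} (A : Matrix (Fin m) (Fin r) ℝ) (w : Fin r → ℝ) :
    ∑ i, (A.mulVec w i) ^ 2 = w ⬝ᵥ ((Aᵀ * A).mulVec w) := by
  rw [← Matrix.mulVec_mulVec, Matrix.dotProduct_mulVec, Matrix.vecMul_transpose]
  simp [dotProduct, sq]

/-- If `(u, v)` is balanced (`uᵀu = vᵀv`) and `rank (u vᵀ) < r`, then there is a unit vector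
`w ∈ ℝ^r` with `u w = 0` and `v w = 0`. -/
theorem balanced_rank_deficient_common_null {m n r : ℕ}
    (u : Matrix (Fin m) (Fin r) ℝ) (v : Matrix (Fin n) (Fin r) ℝ)
    (hbal : uᵀ * u = vᵀ * v) (hrank : (u * vᵀ).rank < r) :
    ∃ w : Fin r → ℝ, (∑ i, w i ^ 2 = 1) ∧ u.mulVec w = 0 ∧ v.mulVec w = 0 := by
  -- Step 1: rank v = rank (u * vᵀ)
  have key : ((u * vᵀ)ᵀ * (u * vᵀ)) = (v * vᵀ)ᵀ * (v * vᵀ) := by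
    rw [Matrix.transpose_mul, Matrix.transpose_transpose, Matrix.transpose_mul,
      Matrix.transpose_transpose]
    calc v * uᵀ * (u * vᵀ) = v * (uᵀ * u) * vᵀ := by
          simp only [Matrix.mul_assoc]
      _ = v * (vᵀ * v) * vᵀ := by rw [hbal]
      _ = v * vᵀ * (v * vᵀ) := by simp only [Matrix.mul_assoc]
  have hv_rank : v.rank < r := by
    have h1 : (u * vᵀ).rank = (v * vᵀ).rank := by
      rw [← Matrix.rank_transpose_mul_self (u * vᵀ), key,
        Matrix.rank_transpose_mul_self]
    have h2 : (v * vᵀ).rank = v.rank := Matrix.rank_self_mul_transpose v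
    omega
  -- Step 2: nontrivial kernel of v
  have hker : ∃ w : Fin r → ℝ, w ≠ 0 ∧ v.mulVec w = 0 := by
    by_contra h
    push_neg at h
    have hinj : Function.Injective v.mulVecLin := by
      rw [← LinearMap.ker_eq_bot]
      rw [Submodule.eq_bot_iff]
      intro w hw
      by_contra hw0
      exact h w hw0 (by simpa using hw)
    have : v.rank = r := by
      have := LinearMap.finrank_range_add_finrank_ker v.mulVecLin
      rw [LinearMap.ker_eq_bot.mpr hinj] at this
      simpa [Matrix.rank, Module.finrank_fin_fun] using this
    omega
  obtain ⟨w, hw0, hvw⟩ := hker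
  -- Step 3: u w = 0 too
  have huw : u.mulVec w = 0 := by
    have hsum : ∑ i, (u.mulVec w i) ^ 2 = 0 := by
      rw [sq_sum_mulVec, hbal, ← Matrix.mulVec_mulVec, hvw]
      simp
    funext i
    have := (Finset.sum_eq_zero_iff_of_nonneg (fun j _ => sq_nonneg (u.mulVec w j))).mp
      hsum i (Finset.mem_univ i)
    simpa [pow_eq_zero_iff] using this
  -- Step 4: normalize
  set c : ℝ := Real.sqrt (∑ i, w i ^ 2) with hc
  have hsumpos : 0 < ∑ i, w i ^ 2 := by
    obtain ⟨i, hi⟩ := Function.ne_iff.mp hw0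
    exact Finset.sum_pos' (fun j _ => sq_nonneg _) ⟨i, Finset.mem_univ i, sq_pos_of_ne_zero hi⟩
  have hcpos : 0 < c := Real.sqrt_pos.mpr hsumpos
  refine ⟨c⁻¹ • w, ?_, ?_, ?_⟩
  · have : ∑ i, (c⁻¹ • w) i ^ 2 = c⁻¹ ^ 2 * ∑ i, w i ^ 2 := by
      rw [Finset.mul_sum]
      simp [mul_pow, mul_comm]
    have h2 : (∑ i, w i ^ 2) = c ^ 2 :=
      (Real.sq_sqrt (Finset.sum_nonneg fun j _ => sq_nonneg (w j))).symm
    rw [this, h2]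
    field_simp
  · rw [Matrix.mulVec_smul, huw, smul_zero]
  · rw [Matrix.mulVec_smul, hvw, smul_zero]
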